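/- Let X be a semitopological group. Let f ∈ X, let F ⊆ X be finite, let L ⊆ X be nowhere dense, and let V ⊆ X be non-empty open. If (F·V) ∩ L = ∅, then there exists a non-empty open set V′ ⊆ V such that ((F ∪ {f})·V′) ∩ L = ∅. -/
import Mathlib

open Pointwise

/-- **Extension of a separation** (Lemma 1).
In a semitopological group `X` (a group with a topology in which all left and right
translations are continuous), for `f ∈ X`, a finite set `F ⊆ X`, a nowhere dense set `L`,
and a non-empty open set `V`, if `(F * V) ∩ L = ∅` then there is a non-empty open
`V' ⊆ V` with `((F ∪ {f}) * V') ∩ L = ∅`. -/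
theorem lemma1_extension_of_separation
    {X : Type*} [Group X] [TopologicalSpace X]
    (hleft : ∀ g : X, Continuous fun x => g * x)
    (hright : ∀ g : X, Continuous fun x => x * g)
    (f : X) (F : Set X) (hF : F.Finite)
    (L : Set X) (hL : IsNowhereDense L)
    (V : Set X) (hV : IsOpen V) (hVne : V.Nonempty)
    (hsep : (F * V) ∩ L = ∅) :
    ∃ V' : Set X, V' ⊆ V ∧ IsOpen V' ∧ V'.Nonempty ∧
      ((F ∪ {f}) * V') ∩ L = ∅ := by
  -- f * V is open: it is the preimage of V under x ↦ f⁻¹ * x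
  have hfV : (fun x => f * x) '' V = (fun x => f⁻¹ * x) ⁻¹' V := by
    ext x
    constructor
    · rintro ⟨v, hv, rfl⟩; simpa using hv
    · intro hx; exact ⟨f⁻¹ * x, hx, by group⟩
  have hfVopen : IsOpen ((fun x => f * x) '' V) := by
    rw [hfV]; exact (hleft f⁻¹).isOpen_preimage V hV
  -- W = (f*V) \ closure L is open and nonempty
  set W : Set X := (fun x => f * x) '' V ∩ (closure L)ᶜ with hW
  have hWopen : IsOpen W := hfVopen.inter isClosed_closure.isOpen_compl
  have hWne : W.Nonempty := by
    by_contra h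
    rw [Set.not_nonempty_iff_eq_empty, hW] at h
    have hsub : (fun x => f * x) '' V ⊆ closure L := by
      intro x hx
      by_contra hx2
      exact Set.eq_empty_iff_forall_notMem.mp h x ⟨hx, hx2⟩
    have : (fun x => f * x) '' V ⊆ interior (closure L) :=
      hfVopen.subset_interior_iff.mpr hsub
    rw [hL] at this
    obtain ⟨v, hv⟩ := hVne
    exact this ⟨v, hv, rfl⟩
  refine ⟨(fun x => f * x) ⁻¹' W, ?_, (hleft f).isOpen_preimage W hWopen, ?_, ?_⟩
  · intro x hx
    obtain ⟨⟨v, hv, hfv⟩, _⟩ := hx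
    have : v = x := mul_left_cancel hfv
    exact this ▸ hv
  · obtain ⟨w, ⟨v, hv, rfl⟩, hw2⟩ := hWne
    exact ⟨v, ⟨v, hv, rfl⟩, hw2⟩
  · ext x
    simp only [Set.mem_inter_iff, Set.mem_empty_iff_false, iff_false, not_and]
    rintro ⟨a, ha, v, hv, rfl⟩ hxL
    rcases ha with ha | ha
    · -- a ∈ F
      have hvV : v ∈ V := by
        obtain ⟨⟨u, hu, hfu⟩, _⟩ := hv
        have : u = v := mul_left_cancel hfu
        exact this ▸ hu
      have : a * v ∈ (F * V) ∩ L := ⟨⟨a, ha, v, hvV, rfl⟩, hxL⟩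
      rw [hsep] at this; exact this
    · -- a = f
      rw [Set.mem_singleton_iff] at ha
      subst ha
      exact hv.2 (subset_closure hxL)
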